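/- Let m be a positive integer and C₀ ≥ 1. There exists a constant C > 1 depending only on m and C₀ such that for all p, q ∈ (0, m) with p + q < m, the integral over w ∈ ℝ^m with |w| ≤ C₀ of |w|^(−p) |z − w|^(−q) dw is at most C / (m − (p+q)), uniformly in z ∈ ℝ^m. -/

import Mathlib

open MeasureTheory Set

open MeasureTheory Set Metric Measure
open scoped ENNReal

local notation "dim" => Module.finrank ℝ

lemma aux_polar (m : ℕ) (hm : 0 < m) (g : ℝ → ℝ≥0∞) (hg : Measurable g) :
    ∫⁻ x : EuclideanSpace ℝ (Fin m), g ‖x‖ =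
      (m : ℝ≥0∞) * volume (ball (0 : EuclideanSpace ℝ (Fin m)) 1) *
        ∫⁻ r in Ioi (0:ℝ), ENNReal.ofReal (r ^ (m - 1)) * g r := by
  set E := EuclideanSpace ℝ (Fin m)
  haveI : Nontrivial E := by
    have : 0 < dim E := by simp [E, finrank_euclideanSpace_fin, hm]
    exact Module.nontrivial_of_finrank_pos this
  have hdim : dim E = m := by simp [E, finrank_euclideanSpace_fin]
  set μ : Measure E := volume with hμ
  have hg' : Measurable fun r : Ioi (0:ℝ) => g ↑r := hg.comp measurable_subtype_coe
  calc ∫⁻ x : E, g ‖x‖ ∂μ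
      = ∫⁻ x in ({0}ᶜ : Set E), g ‖x‖ ∂μ := by
        rw [MeasureTheory.restrict_compl_singleton]
    _ = ∫⁻ x : ({0}ᶜ : Set E), g ‖x.1‖ ∂(μ.comap (↑)) :=
        (lintegral_subtype_comap (measurableSet_singleton _).compl _).symm
    _ = ∫⁻ y : sphere (0:E) 1 × Ioi (0:ℝ), g y.2
          ∂(μ.toSphere.prod (Measure.volumeIoiPow (dim E - 1))) := by
        simpa using μ.measurePreserving_homeomorphUnitSphereProd.lintegral_comp
          (hg'.comp measurable_snd)
    _ = μ.toSphere univ * ∫⁻ r : Ioi (0:ℝ), g r ∂(Measure.volumeIoiPow (dim E - 1)) := by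
        rw [lintegral_prod (fun y : sphere (0:E) 1 × Ioi (0:ℝ) => g ↑y.2)
          (hg'.comp measurable_snd).aemeasurable]
        simp [lintegral_const, mul_comm]
    _ = μ.toSphere univ *
          ∫⁻ r : Ioi (0:ℝ), ENNReal.ofReal (r.1 ^ (m - 1)) * g r.1
            ∂(Measure.comap Subtype.val volume) := by
        rw [hdim, Measure.volumeIoiPow]
        congr 1
        rw [lintegral_withDensity_eq_lintegral_mul _ (by measurability) hg']
        rfl
    _ = μ.toSphere univ * ∫⁻ r in Ioi (0:ℝ), ENNReal.ofReal (r ^ (m - 1)) * g r := by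
        rw [← lintegral_subtype_comap measurableSet_Ioi
          (fun r : ℝ => ENNReal.ofReal (r ^ (m - 1)) * g r)]
    _ = _ := by rw [μ.toSphere_apply_univ, hdim]

lemma aux_ball (m : ℕ) (hm : 0 < m) (C₀ : ℝ) (hC₀ : 1 ≤ C₀) (s : ℝ)
    (hs0 : 0 < s) (hsm : s < m) :
    ∫⁻ u : EuclideanSpace ℝ (Fin m),
        (if ‖u‖ ≤ C₀ then ENNReal.ofReal (‖u‖ ^ (-s)) else 0) =
      (m : ℝ≥0∞) * volume (ball (0 : EuclideanSpace ℝ (Fin m)) 1) *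
        ENNReal.ofReal (C₀ ^ ((m:ℝ) - s) / ((m:ℝ) - s)) := by
  have hC₀0 : (0:ℝ) < C₀ := lt_of_lt_of_le one_pos hC₀
  set g : ℝ → ℝ≥0∞ := fun r => if r ≤ C₀ then ENNReal.ofReal (r ^ (-s)) else 0 with hgdef
  have hg : Measurable g := by
    apply Measurable.ite (measurableSet_Iic (a := C₀))
    · have : Measurable fun r : ℝ => r ^ (-s) := by fun_prop
      exact ENNReal.measurable_ofReal.comp this
    · exact measurable_const
  have key := aux_polar m hm g hg
  have ht : (-1:ℝ) < (m:ℝ) - 1 - s := by linarith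
  have hInt : IntegrableOn (fun r : ℝ => r ^ ((m:ℝ) - 1 - s)) (Ioc 0 C₀) := by
    rw [← intervalIntegrable_iff_integrableOn_Ioc_of_le hC₀0.le]
    exact intervalIntegral.intervalIntegrable_rpow' ht
  have hval : ∫ r in Ioc (0:ℝ) C₀, r ^ ((m:ℝ) - 1 - s) =
      C₀ ^ ((m:ℝ) - s) / ((m:ℝ) - s) := by
    rw [← intervalIntegral.integral_of_le hC₀0.le,
      integral_rpow (Or.inl ht)]
    rw [Real.zero_rpow (by linarith : ((m:ℝ) - 1 - s) + 1 ≠ 0)]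
    ring_nf
  have hIoi : ∫⁻ r in Ioi (0:ℝ), ENNReal.ofReal (r ^ (m - 1)) * g r =
      ENNReal.ofReal (C₀ ^ ((m:ℝ) - s) / ((m:ℝ) - s)) := by
    have hcongr : ∀ r ∈ Ioi (0:ℝ),
        ENNReal.ofReal (r ^ (m - 1)) * g r =
          (Ioc (0:ℝ) C₀).indicator
            (fun r => ENNReal.ofReal (r ^ ((m:ℝ) - 1 - s))) r := by
      intro r hr
      rw [mem_Ioi] at hr
      by_cases hrC : r ≤ C₀
      · rw [indicator_of_mem (Set.mem_Ioc.2 ⟨hr, hrC⟩), hgdef]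
        simp only [if_pos hrC]
        rw [← ENNReal.ofReal_mul (by positivity)]
        congr 1
        rw [← Real.rpow_natCast r (m - 1), ← Real.rpow_add hr]
        congr 1
        have hcast : ((m - 1 : ℕ) : ℝ) = (m:ℝ) - 1 := by
          rw [Nat.cast_sub hm, Nat.cast_one]
        rw [hcast]; ring
      · rw [indicator_of_notMem (fun h => hrC h.2), hgdef]
        simp [hrC]
    rw [setLIntegral_congr_fun measurableSet_Ioi hcongr]
    rw [lintegral_indicator measurableSet_Ioc _, Measure.restrict_restrict measurableSet_Ioc]
    rw [inter_eq_left.2 Ioc_subset_Ioi_self]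
    rw [← ofReal_integral_eq_lintegral_ofReal hInt]
    · rw [hval]
    · filter_upwards [ae_restrict_mem measurableSet_Ioc] with r hr
      exact Real.rpow_nonneg hr.1.le _
  rw [← hIoi, ← key]

/-- Lemma A.1: uniform convolution bound on a ball, with explicit dependence on the gap
`m - (p + q)`. -/
theorem convolution_wholespace (m : ℕ) (hm : 0 < m) (C₀ : ℝ) (hC₀ : 1 ≤ C₀) :
    ∃ C : ℝ, 1 < C ∧ ∀ p q : ℝ, p ∈ Set.Ioo (0:ℝ) (m:ℝ) → q ∈ Set.Ioo (0:ℝ) (m:ℝ) →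
      p + q < (m:ℝ) →
      ∀ z : EuclideanSpace ℝ (Fin m),
        (∫ w in {w : EuclideanSpace ℝ (Fin m) | ‖w‖ ≤ C₀},
            ‖w‖ ^ (-p) * ‖z - w‖ ^ (-q)) ≤ C / ((m:ℝ) - (p + q)) := by
  set E := EuclideanSpace ℝ (Fin m)
  set V : ℝ := (volume (ball (0:E) 1)).toReal with hV
  have hV0 : 0 ≤ V := ENNReal.toReal_nonneg
  have hC₀0 : (0:ℝ) < C₀ := lt_of_lt_of_le one_pos hC₀
  refine ⟨2 * m * V * C₀ ^ (m:ℝ) + 2, ?_, ?_⟩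
  · have h1 : 0 ≤ 2 * m * V * C₀ ^ (m:ℝ) := by positivity
    linarith
  intro p q hp hq hpq z
  set s : ℝ := p + q with hsdef
  have hs0 : 0 < s := add_pos hp.1 hq.1
  have hsm : s < m := hpq
  set S : Set E := {w : E | ‖w‖ ≤ C₀} with hSdef
  have hS : MeasurableSet S := measurableSet_le (by fun_prop) measurable_const
  set G' : E → ℝ≥0∞ := fun u => if ‖u‖ ≤ C₀ then ENNReal.ofReal (‖u‖ ^ (-s)) else 0
    with hG'def
  have hG' : Measurable G' := by
    apply Measurable.ite hS
    · exact ENNReal.measurable_ofReal.comp (by fun_prop)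
    · exact measurable_const
  have hI : ∫⁻ u : E, G' u =
      (m : ℝ≥0∞) * volume (ball (0:E) 1) *
        ENNReal.ofReal (C₀ ^ ((m:ℝ) - s) / ((m:ℝ) - s)) :=
    aux_ball m hm C₀ hC₀ s hs0 hsm
  set F : E → ℝ := fun w => ‖w‖ ^ (-p) * ‖z - w‖ ^ (-q) with hFdef
  have hFnn : ∀ w, 0 ≤ F w := fun w =>
    mul_nonneg (Real.rpow_nonneg (norm_nonneg _) _) (Real.rpow_nonneg (norm_nonneg _) _)
  have hFm : Measurable F := by fun_prop
  -- pointwise bound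
  have hpt : ∀ w ∈ S, ENNReal.ofReal (F w) ≤ G' w + G' (z - w) := by
    intro w hw
    have hw' : ‖w‖ ≤ C₀ := hw
    rcases le_total ‖w‖ ‖z - w‖ with h | h
    · refine le_trans ?_ le_self_add
      rw [hG'def]; simp only [if_pos hw']
      apply ENNReal.ofReal_le_ofReal
      rcases eq_or_lt_of_le (norm_nonneg w) with h0 | h0
      · have : F w = 0 := by
          rw [hFdef]; simp only [← h0, Real.zero_rpow (neg_ne_zero.2 hp.1.ne'), zero_mul]
        rw [this]; exact Real.rpow_nonneg (norm_nonneg _) _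
      · have hq' : ‖z - w‖ ^ (-q) ≤ ‖w‖ ^ (-q) :=
          Real.rpow_le_rpow_of_nonpos h0 h (neg_nonpos.2 hq.1.le)
        calc F w ≤ ‖w‖ ^ (-p) * ‖w‖ ^ (-q) :=
              mul_le_mul_of_nonneg_left hq' (Real.rpow_nonneg (norm_nonneg _) _)
          _ = ‖w‖ ^ (-s) := by
              rw [← Real.rpow_add h0]; congr 1; rw [hsdef]; ring
    · refine le_trans ?_ le_add_self
      have hzw : ‖z - w‖ ≤ C₀ := le_trans h hw'
      rw [hG'def]; simp only [if_pos hzw]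
      apply ENNReal.ofReal_le_ofReal
      rcases eq_or_lt_of_le (norm_nonneg (z - w)) with h0 | h0
      · have : F w = 0 := by
          rw [hFdef]; simp only [← h0, Real.zero_rpow (neg_ne_zero.2 hq.1.ne'), mul_zero]
        rw [this]; exact Real.rpow_nonneg (norm_nonneg _) _
      · have hp' : ‖w‖ ^ (-p) ≤ ‖z - w‖ ^ (-p) :=
          Real.rpow_le_rpow_of_nonpos h0 h (neg_nonpos.2 hp.1.le)
        calc F w ≤ ‖z - w‖ ^ (-p) * ‖z - w‖ ^ (-q) :=
              mul_le_mul_of_nonneg_right hp' (Real.rpow_nonneg (norm_nonneg _) _)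
          _ = ‖z - w‖ ^ (-s) := by
              rw [← Real.rpow_add h0]; congr 1; rw [hsdef]; ring
  -- lintegral bound
  have hsub : ∫⁻ w : E, G' (z - w) = ∫⁻ u : E, G' u :=
    (measurePreserving_sub_left (volume : Measure E) z).lintegral_comp hG'
  have hlin : ∫⁻ w in S, ENNReal.ofReal (F w) ≤
      2 * ((m : ℝ≥0∞) * volume (ball (0:E) 1) *
        ENNReal.ofReal (C₀ ^ ((m:ℝ) - s) / ((m:ℝ) - s))) := by
    calc ∫⁻ w in S, ENNReal.ofReal (F w)
        ≤ ∫⁻ w in S, (G' w + G' (z - w)) := setLIntegral_mono' hS hpt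
      _ ≤ ∫⁻ w : E, (G' w + G' (z - w)) := setLIntegral_le_lintegral _ _
      _ = (∫⁻ u : E, G' u) + ∫⁻ w : E, G' (z - w) := lintegral_add_left hG' _
      _ = 2 * ∫⁻ u : E, G' u := by rw [hsub, two_mul]
      _ = _ := by rw [hI]
  have hne : (2 : ℝ≥0∞) * ((m : ℝ≥0∞) * volume (ball (0:E) 1) *
      ENNReal.ofReal (C₀ ^ ((m:ℝ) - s) / ((m:ℝ) - s))) ≠ ∞ := by
    refine ENNReal.mul_ne_top (by simp) (ENNReal.mul_ne_top
      (ENNReal.mul_ne_top (by simp) measure_ball_lt_top.ne) ENNReal.ofReal_ne_top)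
  have heq : (∫ w in S, F w) = (∫⁻ w in S, ENNReal.ofReal (F w)).toReal := by
    rw [integral_eq_lintegral_of_nonneg_ae (ae_of_all _ hFnn)
      hFm.aestronglyMeasurable]
  have hms : 0 < (m:ℝ) - s := by linarith
  have hdivnn : 0 ≤ C₀ ^ ((m:ℝ) - s) / ((m:ℝ) - s) := by positivity
  calc (∫ w in S, F w) = (∫⁻ w in S, ENNReal.ofReal (F w)).toReal := heq
    _ ≤ (2 * ((m : ℝ≥0∞) * volume (ball (0:E) 1) *
        ENNReal.ofReal (C₀ ^ ((m:ℝ) - s) / ((m:ℝ) - s)))).toReal :=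
        ENNReal.toReal_mono hne hlin
    _ = 2 * (m * V * (C₀ ^ ((m:ℝ) - s) / ((m:ℝ) - s))) := by
        rw [ENNReal.toReal_mul, ENNReal.toReal_mul, ENNReal.toReal_mul,
          ENNReal.toReal_ofReal hdivnn]
        simp [hV]
    _ = (2 * m * V * C₀ ^ ((m:ℝ) - s)) / ((m:ℝ) - s) := by ring
    _ ≤ (2 * m * V * C₀ ^ (m:ℝ) + 2) / ((m:ℝ) - s) := by
        have h1 : C₀ ^ ((m:ℝ) - s) ≤ C₀ ^ (m:ℝ) :=
          Real.rpow_le_rpow_of_exponent_le hC₀ (by linarith)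
        have h2 : (0:ℝ) ≤ 2 * m * V := by positivity
        gcongr
        nlinarith
    _ = (2 * m * V * C₀ ^ (m:ℝ) + 2) / ((m:ℝ) - (p + q)) := by rw [hsdef]
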